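/- Let β > 1 be the unique real root of β³ = 2β² − β + 1 (β ≈ 1.755). Then a sequence ε = ε_1ε_2⋯ ∈ {0,1}^ℕ belongs to the β-shift Ω_β if and only if for every k ≥ 1: ε_k = 1 and ε_{k+1} = 1 imply ε_{k+2} = 0 and ε_{k+3} = 0. -/

import Mathlib

open Filter Finset Topology

/-- `s_n = Σ_{k=1}^n ε_k / β^k`, the partial sums associated with a binary sequence. -/
noncomputable def parrySum (β : ℝ) (ε : ℕ → Fin 2) (n : ℕ) : ℝ :=
  ∑ k ∈ Finset.range n, (ε k : ℝ) / β ^ (k + 1)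

/-- `ε` is the Parry expansion of `x` in base `β`: for every `n ≥ 1`,
`s_n ≤ x < s_n + β^{-n}`. -/
def IsParryExpansion (β : ℝ) (x : ℝ) (ε : ℕ → Fin 2) : Prop :=
  ∀ n, 1 ≤ n → parrySum β ε n ≤ x ∧ x < parrySum β ε n + (β ^ n)⁻¹

/-- The β-shift `Ω_β`: the closure in `{0,1}^ℕ` of the set of Parry expansions of the
real numbers in `[0,1)`. -/
def betaShift (β : ℝ) : Set (ℕ → Fin 2) :=
  closure {ε | ∃ x, 0 ≤ x ∧ x < 1 ∧ IsParryExpansion β x ε}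

lemma fin2_eq_zero_or_one (a : Fin 2) : a = 0 ∨ a = 1 := by omega

lemma sum_Ico_peel_le (f : ℕ → ℝ) (j N : ℕ) (hf : 0 ≤ f j) :
    ∑ k ∈ Finset.Ico j N, f k ≤ f j + ∑ k ∈ Finset.Ico (j+1) N, f k := by
  rcases lt_or_ge j N with h | h
  · rw [Finset.sum_eq_sum_Ico_succ_bot h]
  · rw [Finset.Ico_eq_empty (by omega), Finset.Ico_eq_empty (by omega)]
    simpa using hf

lemma sum_Ico_peel_eq (f : ℕ → ℝ) (j N : ℕ) (hf : f j = 0) :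
    ∑ k ∈ Finset.Ico j N, f k = ∑ k ∈ Finset.Ico (j+1) N, f k := by
  rcases lt_or_ge j N with h | h
  · rw [Finset.sum_eq_sum_Ico_succ_bot h, hf, zero_add]
  · rw [Finset.Ico_eq_empty (by omega), Finset.Ico_eq_empty (by omega)]

/-- For this `β`, `β^{-1} + β^{-2} + β^{-4} = 1` (scaled by `β^{-m}`). -/
lemma key4' (β : ℝ) (hβ : 1 < β) (heq : β ^ 3 = 2 * β ^ 2 - β + 1) (m : ℕ) :
    1 / β ^ (m+1) + (1 / β ^ (m+2) + (β ^ (m+4))⁻¹) = (β ^ m)⁻¹ := by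
  have hβ0 : (0:ℝ) < β := by linarith
  have h4 : β ^ 4 = β ^ 3 + β ^ 2 + 1 := by linear_combination (β+1)*heq
  have hp : (0:ℝ) < β ^ m := pow_pos hβ0 m
  have e : 1 / β ^ (m+1) + (1 / β ^ (m+2) + (β ^ (m+4))⁻¹)
      = (β ^ m)⁻¹ * (1/β + 1/β^2 + 1/β^4) := by
    rw [pow_add, pow_add, pow_add]; field_simp; ring
  have e2 : 1/β + 1/β^2 + 1/β^4 = 1 := by
    field_simp
    linear_combination (-1)*h4
  rw [e, e2, mul_one]

/-- Key tail-sum bound: any admissible tail sums to strictly less than `β^{-m}`. -/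
lemma tail_lt (β : ℝ) (hβ : 1 < β) (heq : β ^ 3 = 2 * β ^ 2 - β + 1) (ε : ℕ → Fin 2)
    (hS : ∀ k : ℕ, ε k = 1 ∧ ε (k + 1) = 1 → ε (k + 2) = 0 ∧ ε (k + 3) = 0) :
    ∀ L m N : ℕ, N ≤ m + L →
      ∑ k ∈ Finset.Ico m N, (ε k : ℝ) / β ^ (k + 1) < (β ^ m)⁻¹ := by
  have hβ0 : (0:ℝ) < β := by linarith
  have hg : β + 1 ≤ β ^ 2 := by nlinarith
  have hnn : ∀ j : ℕ, 0 ≤ (ε j : ℝ) / β ^ (j+1) := fun j => by positivity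
  have hle : ∀ j : ℕ, (ε j : ℝ) / β ^ (j+1) ≤ 1 / β ^ (j+1) := by
    intro j
    gcongr
    exact_mod_cast (ε j).is_le
  have hmono : ∀ m : ℕ, (β ^ (m+1))⁻¹ < (β ^ m)⁻¹ := by
    intro m; gcongr
    · omega
  have key2 : ∀ m : ℕ, 1 / β ^ (m+1) + (β ^ (m+2))⁻¹ ≤ (β ^ m)⁻¹ := by
    intro m
    have hp : (0:ℝ) < β ^ m := pow_pos hβ0 m
    have e : 1 / β ^ (m+1) + (β ^ (m+2))⁻¹ = (β ^ m)⁻¹ * (1/β + 1/β^2) := by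
      rw [pow_add, pow_add]; field_simp
    rw [e]
    calc (β ^ m)⁻¹ * (1/β + 1/β^2) ≤ (β ^ m)⁻¹ * 1 := by
          apply mul_le_mul_of_nonneg_left ?_ (by positivity)
          rw [div_add_div _ _ (by positivity) (by positivity), div_le_one (by positivity)]
          nlinarith
      _ = (β ^ m)⁻¹ := mul_one _
  intro L
  induction L with
  | zero =>
    intro m N hN
    rw [Finset.Ico_eq_empty (by omega), Finset.sum_empty]
    positivity
  | succ L IH =>
    intro m N hN
    rcases fin2_eq_zero_or_one (ε m) with h0 | h1
    · calc ∑ k ∈ Finset.Ico m N, (ε k : ℝ) / β ^ (k + 1)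
          = ∑ k ∈ Finset.Ico (m+1) N, (ε k : ℝ) / β ^ (k + 1) := by
            exact sum_Ico_peel_eq _ _ _ (by rw [h0]; simp)
        _ < (β ^ (m+1))⁻¹ := IH (m+1) N (by omega)
        _ < (β ^ m)⁻¹ := hmono m
    · rcases fin2_eq_zero_or_one (ε (m+1)) with h0' | h1'
      · calc ∑ k ∈ Finset.Ico m N, (ε k : ℝ) / β ^ (k + 1)
            ≤ (ε m : ℝ) / β ^ (m+1) + ∑ k ∈ Finset.Ico (m+1) N, (ε k : ℝ) / β ^ (k + 1) :=
              sum_Ico_peel_le _ _ _ (hnn m)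
          _ = (ε m : ℝ) / β ^ (m+1) + ∑ k ∈ Finset.Ico (m+2) N, (ε k : ℝ) / β ^ (k + 1) := by
              rw [sum_Ico_peel_eq _ _ _ (by rw [h0']; simp)]
          _ < 1 / β ^ (m+1) + (β ^ (m+2))⁻¹ :=
              add_lt_add_of_le_of_lt (hle m) (IH (m+2) N (by omega))
          _ ≤ (β ^ m)⁻¹ := key2 m
      · obtain ⟨hz2, hz3⟩ := hS m ⟨h1, h1'⟩
        calc ∑ k ∈ Finset.Ico m N, (ε k : ℝ) / β ^ (k + 1)
            ≤ (ε m : ℝ) / β ^ (m+1) + ∑ k ∈ Finset.Ico (m+1) N, (ε k : ℝ) / β ^ (k + 1) :=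
              sum_Ico_peel_le _ _ _ (hnn m)
          _ ≤ (ε m : ℝ) / β ^ (m+1) + ((ε (m+1) : ℝ) / β ^ (m+2)
                + ∑ k ∈ Finset.Ico (m+2) N, (ε k : ℝ) / β ^ (k + 1)) := by
              have := sum_Ico_peel_le (fun k => (ε k : ℝ) / β ^ (k + 1)) (m+1) N (hnn (m+1))
              simpa using by linarith [this]
          _ = (ε m : ℝ) / β ^ (m+1) + ((ε (m+1) : ℝ) / β ^ (m+2)
                + ∑ k ∈ Finset.Ico (m+4) N, (ε k : ℝ) / β ^ (k + 1)) := by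
              rw [sum_Ico_peel_eq _ (m+2) _ (by rw [hz2]; simp),
                show m+2+1 = m+3 from rfl,
                sum_Ico_peel_eq _ (m+3) _ (by rw [hz3]; simp)]
          _ < 1 / β ^ (m+1) + (1 / β ^ (m+2) + (β ^ (m+4))⁻¹) := by
              have h1' := hle m
              have h2' := hle (m+1)
              have h3' := IH (m+4) N (by omega)
              linarith
          _ = (β ^ m)⁻¹ := key4' β hβ heq m

/-- Forward direction: Parry expansions of points of `[0,1)` satisfy the condition. -/
lemma parry_admissible (β : ℝ) (hβ : 1 < β) (heq : β ^ 3 = 2 * β ^ 2 - β + 1)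
    (x : ℝ) (hx1 : x < 1) (ε : ℕ → Fin 2) (hε : IsParryExpansion β x ε) :
    ∀ k : ℕ, ε k = 1 ∧ ε (k + 1) = 1 → ε (k + 2) = 0 ∧ ε (k + 3) = 0 := by
  have hβ0 : (0:ℝ) < β := by linarith
  have hβ2 : β < 2 := by nlinarith
  have h3 : β ^ 3 < β ^ 2 + β + 1 := by nlinarith
  intro k ⟨h1, h2⟩
  have c1 : (ε k : ℝ) = 1 := by rw [h1]; simp
  have c2 : (ε (k+1) : ℝ) = 1 := by rw [h2]; simp
  have hup : x < parrySum β ε k + (β ^ k)⁻¹ := by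
    rcases Nat.eq_zero_or_pos k with rfl | hk
    · simpa [parrySum] using hx1
    · exact (hε k hk).2
  have hz2 : ε (k+2) = 0 := by
    by_contra hcon
    have h3' : (ε (k+2) : ℝ) = 1 := by
      rcases fin2_eq_zero_or_one (ε (k+2)) with h | h
      · exact absurd h hcon
      · rw [h]; simp
    have hlow := (hε (k+3) (by omega)).1
    have e3 : parrySum β ε (k+3) = parrySum β ε k
        + ((ε k : ℝ)/β^(k+1) + (ε (k+1) : ℝ)/β^(k+2) + (ε (k+2) : ℝ)/β^(k+3)) := by
      unfold parrySum
      rw [show k+3 = k+2+1 from rfl, Finset.sum_range_succ,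
        show k+2 = k+1+1 from rfl, Finset.sum_range_succ, Finset.sum_range_succ]
      ring
    rw [e3, c1, c2, h3'] at hlow
    have hp : (0:ℝ) < (β ^ k)⁻¹ := by positivity
    have efac : 1/β^(k+1) + 1/β^(k+2) + 1/β^(k+3) = (β^k)⁻¹ * (1/β + 1/β^2 + 1/β^3) := by
      rw [pow_add, pow_add, pow_add]; field_simp
    have hbase : (1:ℝ) < 1/β + 1/β^2 + 1/β^3 := by
      have : (β^2 + β + 1)/β^3 = 1/β + 1/β^2 + 1/β^3 := by field_simp
      rw [← this]
      rw [lt_div_iff₀ (by positivity)]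
      linarith
    have := mul_lt_mul_of_pos_left hbase hp
    rw [mul_one] at this
    rw [efac] at hlow
    linarith
  have hz3 : ε (k+3) = 0 := by
    by_contra hcon
    have h4' : (ε (k+3) : ℝ) = 1 := by
      rcases fin2_eq_zero_or_one (ε (k+3)) with h | h
      · exact absurd h hcon
      · rw [h]; simp
    have c0 : (ε (k+2) : ℝ) = 0 := by rw [hz2]; simp
    have hlow := (hε (k+4) (by omega)).1
    have e4 : parrySum β ε (k+4) = parrySum β ε k
        + ((ε k : ℝ)/β^(k+1) + (ε (k+1) : ℝ)/β^(k+2) + (ε (k+2) : ℝ)/β^(k+3)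
          + (ε (k+3) : ℝ)/β^(k+4)) := by
      unfold parrySum
      rw [show k+4 = k+3+1 from rfl, Finset.sum_range_succ,
        show k+3 = k+2+1 from rfl, Finset.sum_range_succ,
        show k+2 = k+1+1 from rfl, Finset.sum_range_succ, Finset.sum_range_succ]
      ring
    rw [e4, c1, c2, c0, h4'] at hlow
    have ekey := key4' β hβ heq k
    have : parrySum β ε k + (β ^ k)⁻¹ ≤ x := by
      rw [← ekey]
      simp only [zero_div, one_div] at hlow ⊢
      linarith
    linarith
  exact ⟨hz2, hz3⟩

/-- The admissibility condition defines a closed set. -/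
lemma S_closed :
    IsClosed {ε' : ℕ → Fin 2 | ∀ k : ℕ,
      ε' k = 1 ∧ ε' (k + 1) = 1 → ε' (k + 2) = 0 ∧ ε' (k + 3) = 0} := by
  have : {ε' : ℕ → Fin 2 | ∀ k : ℕ,
      ε' k = 1 ∧ ε' (k + 1) = 1 → ε' (k + 2) = 0 ∧ ε' (k + 3) = 0}
      = ⋂ k : ℕ, (fun ε' : ℕ → Fin 2 => (ε' k, ε' (k+1), ε' (k+2), ε' (k+3))) ⁻¹'
        {p : Fin 2 × Fin 2 × Fin 2 × Fin 2 | p.1 = 1 ∧ p.2.1 = 1 → p.2.2.1 = 0 ∧ p.2.2.2 = 0} := by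
    ext ε'
    simp only [Set.mem_setOf_eq, Set.mem_iInter, Set.mem_preimage]
  rw [this]
  apply isClosed_iInter
  intro k
  apply IsClosed.preimage
  · exact (continuous_apply k).prodMk ((continuous_apply (k+1)).prodMk
      ((continuous_apply (k+2)).prodMk (continuous_apply (k+3))))
  · exact isClosed_discrete _

/-- **Lemma 8.1.** For the Pisot number `β ≈ 1.755` with `β³ = 2β² − β + 1`, the β-shift
is the subshift of finite type of the binary sequences in which every factor `11` is
followed by `00`. -/
theorem betaShift_finiteType (β : ℝ) (hβ : 1 < β)
    (heq : β ^ 3 = 2 * β ^ 2 - β + 1) (ε : ℕ → Fin 2) :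
    ε ∈ betaShift β ↔
      ∀ k : ℕ, ε k = 1 ∧ ε (k + 1) = 1 → ε (k + 2) = 0 ∧ ε (k + 3) = 0 := by
  have hβ0 : (0:ℝ) < β := by linarith
  constructor
  · intro hmem
    have hsub : {ε' : ℕ → Fin 2 | ∃ x, 0 ≤ x ∧ x < 1 ∧ IsParryExpansion β x ε'} ⊆
        {ε' : ℕ → Fin 2 | ∀ k : ℕ,
          ε' k = 1 ∧ ε' (k + 1) = 1 → ε' (k + 2) = 0 ∧ ε' (k + 3) = 0} := by
      rintro ε' ⟨x, _, hx1, hexp⟩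
      exact parry_admissible β hβ heq x hx1 ε' hexp
    exact closure_minimal hsub S_closed hmem
  · intro hS
    have hmem : ∀ n : ℕ, (fun k => if k < n then ε k else 0 : ℕ → Fin 2) ∈
        {ε' : ℕ → Fin 2 | ∃ x, 0 ≤ x ∧ x < 1 ∧ IsParryExpansion β x ε'} := by
      intro n
      refine ⟨parrySum β ε n, ?_, ?_, ?_⟩
      · exact Finset.sum_nonneg fun k _ => by positivity
      · have h := tail_lt β hβ heq ε hS n 0 n (by omega)
        calc parrySum β ε n = ∑ k ∈ Finset.Ico 0 n, (ε k : ℝ) / β ^ (k + 1) := by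
              rw [parrySum, Finset.range_eq_Ico]
          _ < (β ^ 0)⁻¹ := h
          _ = 1 := by norm_num
      · intro m _
        rcases le_or_gt m n with hmn | hnm
        · have hps : parrySum β (fun k => if k < n then ε k else 0) m = parrySum β ε m := by
            unfold parrySum
            refine Finset.sum_congr rfl fun k hk => ?_
            have hkn : k < n := lt_of_lt_of_le (Finset.mem_range.mp hk) hmn
            simp [hkn]
          have hsplit : parrySum β ε n
              = parrySum β ε m + ∑ k ∈ Finset.Ico m n, (ε k : ℝ) / β ^ (k + 1) := by
            unfold parrySum
            rw [Finset.range_eq_Ico, Finset.range_eq_Ico,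
              ← Finset.sum_Ico_consecutive _ (Nat.zero_le m) hmn]
          have htail := tail_lt β hβ heq ε hS n m n (by omega)
          have hnn : 0 ≤ ∑ k ∈ Finset.Ico m n, (ε k : ℝ) / β ^ (k + 1) :=
            Finset.sum_nonneg fun k _ => by positivity
          rw [hps, hsplit]
          constructor
          · linarith
          · linarith
        · have hps : parrySum β (fun k => if k < n then ε k else 0) m = parrySum β ε n := by
            unfold parrySum
            rw [Finset.range_eq_Ico, Finset.range_eq_Ico,
              ← Finset.sum_Ico_consecutive _ (Nat.zero_le n) hnm.le]
            have h1 : ∑ k ∈ Finset.Ico 0 n,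
                ((if k < n then ε k else 0 : Fin 2) : ℝ) / β ^ (k + 1)
                = ∑ k ∈ Finset.Ico 0 n, (ε k : ℝ) / β ^ (k + 1) := by
              refine Finset.sum_congr rfl fun k hk => ?_
              simp [(Finset.mem_Ico.mp hk).2]
            have h2 : ∑ k ∈ Finset.Ico n m,
                ((if k < n then ε k else 0 : Fin 2) : ℝ) / β ^ (k + 1) = 0 := by
              refine Finset.sum_eq_zero fun k hk => ?_
              have : ¬ k < n := by have := (Finset.mem_Ico.mp hk).1; omega
              simp [this]
            rw [h1, h2, add_zero]
          rw [hps]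
          refine ⟨le_refl _, lt_add_of_pos_right _ (by positivity)⟩
    have htend : Filter.Tendsto
        (fun n : ℕ => (fun k => if k < n then ε k else 0 : ℕ → Fin 2)) atTop (𝓝 ε) := by
      rw [tendsto_pi_nhds]
      intro k
      have heq' : (fun _ : ℕ => ε k) =ᶠ[atTop]
          (fun n : ℕ => (fun k => if k < n then ε k else 0 : ℕ → Fin 2) k) := by
        filter_upwards [Filter.eventually_ge_atTop (k+1)] with n hn
        have hkn : k < n := by omega
        simp [hkn]
      exact Filter.Tendsto.congr' heq' tendsto_const_nhds
    exact mem_closure_of_tendsto htend (Filter.Eventually.of_forall hmem)
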